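/- Let V ⊂ Z^N be a circular subset such that Λ_V ⊂ Z^N has finite and odd index and whose Wu element W = ∑_{v∈V} v satisfies W·W = -N. Then there exists a canonical basis E of Z^N adapted to V. In particular, for each e ∈ E one has ∑_{v∈V} v·e = 1. -/

import Mathlib

open Finset

/-- The standard negative definite bilinear form on `ℤ^N`:
`x·y = -∑ i, x i * y i`. -/
def negForm (N : ℕ) (u v : Fin N → ℤ) : ℤ := -∑ i, u i * v i

/-- A canonical basis of `ℤ^N`: a set of `N` vectors with `e·e = -1` and
distinct elements pairwise orthogonal. -/
def IsCanonicalBasis (N : ℕ) (E : Finset (Fin N → ℤ)) : Prop :=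
  E.card = N ∧ (∀ e ∈ E, negForm N e e = -1) ∧
    ∀ e ∈ E, ∀ f ∈ E, e ≠ f → negForm N e f = 0

/-- The equivalence relation on `ℤ^N` generated by `u ~ v` iff
`u, v ∈ V` and `u·v ≠ 0`. -/
def Conn (N : ℕ) (V : Finset (Fin N → ℤ)) : (Fin N → ℤ) → (Fin N → ℤ) → Prop :=
  Relation.EqvGen fun u v => u ∈ V ∧ v ∈ V ∧ negForm N u v ≠ 0

open scoped Classical in
/-- The connected component of `v` in `V`. -/
noncomputable def compOf (N : ℕ) (V : Finset (Fin N → ℤ)) (v : Fin N → ℤ) :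
    Finset (Fin N → ℤ) :=
  V.filter fun u => Conn N V u v

/-- A circular subset of `ℤ^N`. -/
def IsCircular (N : ℕ) (V : Finset (Fin N → ℤ)) : Prop :=
  (∀ v ∈ V, 3 ≤ (compOf N V v).card) ∧
  (∀ u ∈ V, ∀ v ∈ V, u ≠ v →
    negForm N u v = -1 ∨ negForm N u v = 0 ∨ negForm N u v = 1) ∧
  (∀ v ∈ V,
    (V.filter fun u => u ≠ v ∧ (negForm N u v = 1 ∨ negForm N u v = -1)).card = 2)

/-- `E` is a canonical basis adapted to `V`:  `∑_{v ∈ V} v = -∑_{e ∈ E} e`. -/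
def IsAdaptedBasis (N : ℕ) (E V : Finset (Fin N → ℤ)) : Prop :=
  IsCanonicalBasis N E ∧ (∑ v ∈ V, v) = -∑ e ∈ E, e

open scoped Classical in
/-- A semipositive circular subset: each connected component contains exactly one
(unordered) pair of distinct vectors `u, v` with `u·v = -1`. -/
def IsSemipositive (N : ℕ) (V : Finset (Fin N → ℤ)) : Prop :=
  IsCircular N V ∧ ∀ v₀ ∈ V,
    (((compOf N V v₀) ×ˢ (compOf N V v₀)).filter fun p =>
      p.1 ≠ p.2 ∧ negForm N p.1 p.2 = -1).card = 2

/-- A positive circular subset: `u·v ≥ 0` for all distinct `u, v ∈ V`. -/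
def IsPositive (N : ℕ) (V : Finset (Fin N → ℤ)) : Prop :=
  IsCircular N V ∧ ∀ u ∈ V, ∀ v ∈ V, u ≠ v → 0 ≤ negForm N u v

/-- A single blowup of a string of nonnegative integers. -/
inductive IsBlowup : List ℕ → List ℕ → Prop
  | left (a b : ℕ) (m : List ℕ) :
      IsBlowup (a :: (m ++ [b])) (1 :: (a + 1) :: (m ++ [b + 1]))
  | middle (a b : ℕ) (p s : List ℕ) :
      IsBlowup (p ++ a :: b :: s) (p ++ (a + 1) :: 1 :: (b + 1) :: s)
  | right (a b : ℕ) (m : List ℕ) :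
      IsBlowup (a :: (m ++ [b])) ((a + 1) :: (m ++ [b + 1, 1]))

/-- An iterated blowup of `(0,0)`. -/
def IsIteratedBlowup (s : List ℕ) : Prop :=
  Relation.ReflTransGen IsBlowup [0, 0] s

/-- A `(-2)`-expansion of a string of negative integers. -/
inductive IsNeg2Expansion : List ℤ → List ℤ → Prop
  | first (l : List ℤ) (a : ℤ) :
      IsNeg2Expansion (-2 :: (l ++ [a])) (-2 :: -2 :: (l ++ [a - 1]))
  | second (a : ℤ) (l : List ℤ) :
      IsNeg2Expansion (-2 :: a :: l) (-2 :: (a - 1) :: (l ++ [-2]))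

/-- A cyclic listing of (the elements of) a connected component `C` of a circular
subset: a cyclically indexed enumeration of `C` in which consecutive elements
pair to `±1`. -/
def IsCyclicListing (N : ℕ) (C : Finset (Fin N → ℤ)) (m : ℕ)
    (w : ZMod m → (Fin N → ℤ)) : Prop :=
  C.card = m ∧ Function.Injective w ∧ (∀ i, w i ∈ C) ∧ (∀ c ∈ C, ∃ i, w i = c) ∧
    ∀ i : ZMod m, negForm N (w i) (w (i + 1)) = 1 ∨ negForm N (w i) (w (i + 1)) = -1

/-- The index in the cyclic string at which the `i`-th block starts. -/
def blockStart {t : ℕ} (y : Fin t → ℕ) (i : Fin t) : ℕ := ∑ i' ∈ Finset.Iio i, y i'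

/-- The string of squares `(-x₁-2, -2,…,-2, …, -xₜ-2, -2,…,-2)` of the lattice
`Λ_Γ`, as a function on `Fin n` (where `n = ∑ yᵢ`). -/
def sqOf {t : ℕ} (x y : Fin t → ℕ) (n : ℕ) (j : Fin n) : ℤ :=
  -2 - ∑ i : Fin t, if (j : ℕ) = blockStart y i then (x i : ℤ) else 0

/-- The Gram matrix of the lattice `Λ_Γ`: diagonal given by `sq`, consecutive
vertices pair to `1`, the last and first vertices pair to `(-1)^d`, all other
pairs are orthogonal. -/
def gramOf (n : ℕ) (sq : Fin n → ℤ) (d : ℕ) (i j : Fin n) : ℤ :=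
  if i = j then sq i
  else if (j : ℕ) = (i : ℕ) + 1 ∨ (i : ℕ) = (j : ℕ) + 1 then 1
  else if ((i : ℕ) = 0 ∧ (j : ℕ) = n - 1) ∨ ((j : ℕ) = 0 ∧ (i : ℕ) = n - 1)
    then (-1) ^ d
  else 0


section Aux

lemma negForm_sum_left (N : ℕ) (s : Finset (Fin N → ℤ)) (e : Fin N → ℤ) :
    negForm N (∑ v ∈ s, v) e = ∑ v ∈ s, negForm N v e := by
  simp only [negForm, Finset.sum_apply, Finset.sum_mul, ← Finset.sum_neg_distrib]
  rw [Finset.sum_comm]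

lemma negForm_add_left (N : ℕ) (u w v : Fin N → ℤ) :
    negForm N (u + w) v = negForm N u v + negForm N w v := by
  simp [negForm, add_mul, Finset.sum_add_distrib]; ring

lemma negForm_comm (N : ℕ) (u v : Fin N → ℤ) : negForm N u v = negForm N v u := by
  simp [negForm, mul_comm]

lemma negForm_add_right (N : ℕ) (u w v : Fin N → ℤ) :
    negForm N v (u + w) = negForm N v u + negForm N v w := by
  rw [negForm_comm, negForm_add_left, negForm_comm N u v, negForm_comm N w v]

lemma negForm_neg_left (N : ℕ) (u v : Fin N → ℤ) :
    negForm N (-u) v = -negForm N u v := by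
  simp [negForm]

lemma negForm_neg_right (N : ℕ) (u v : Fin N → ℤ) :
    negForm N u (-v) = -negForm N u v := by
  simp [negForm]

lemma negForm_zero_right (N : ℕ) (v : Fin N → ℤ) : negForm N v 0 = 0 := by
  simp [negForm]

lemma negForm_nsmul_left (N : ℕ) (n : ℕ) (u v : Fin N → ℤ) :
    negForm N (n • u) v = n * negForm N u v := by
  simp [negForm, Finset.mul_sum, mul_assoc]

lemma negForm_nsmul_right (N : ℕ) (n : ℕ) (u v : Fin N → ℤ) :
    negForm N u (n • v) = n * negForm N u v := by
  rw [negForm_comm, negForm_nsmul_left, negForm_comm]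

lemma negForm_single (N : ℕ) (i i' : Fin N) (c c' : ℤ) :
    negForm N (Pi.single i c) (Pi.single i' c') = if i = i' then -(c * c') else 0 := by
  simp [negForm, Pi.single_apply]
  simp [eq_comm, apply_ite Neg.neg]

/-- The Wu element is characteristic on `Λ_V`. -/
lemma wu_char (N : ℕ) (V : Finset (Fin N → ℤ)) (hcirc : IsCircular N V) :
    ∀ x ∈ AddSubgroup.closure (V : Set (Fin N → ℤ)),
      Even (negForm N (∑ v ∈ V, v) x + negForm N x x) := by
  classical
  intro x hx
  induction hx using AddSubgroup.closure_induction with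
  | mem v hv =>
    have hv' : v ∈ V := hv
    rw [negForm_sum_left, ← Finset.add_sum_erase _ _ hv']
    have hP : (V.filter fun u => u ≠ v ∧
        (negForm N u v = 1 ∨ negForm N u v = -1)).card = 2 := hcirc.2.2 v hv'
    have hsub : (V.filter fun u => u ≠ v ∧ (negForm N u v = 1 ∨ negForm N u v = -1))
        ⊆ V.erase v := by
      intro u hu
      simp only [Finset.mem_filter] at hu
      exact Finset.mem_erase.2 ⟨hu.2.1, hu.1⟩
    have hsum : ∑ u ∈ V.erase v, negForm N u v =
        ∑ u ∈ V.filter fun u => u ≠ v ∧ (negForm N u v = 1 ∨ negForm N u v = -1),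
          negForm N u v := by
      refine (Finset.sum_subset hsub ?_).symm
      intro u hu hnu
      have huV : u ∈ V := Finset.mem_of_mem_erase hu
      have hune : u ≠ v := Finset.ne_of_mem_erase hu
      simp only [Finset.mem_filter, not_and, not_or] at hnu
      rcases hcirc.2.1 u huV v hv' hune with h | h | h
      · exact absurd h (hnu huV hune).2
      · exact h
      · exact absurd h (hnu huV hune).1
    obtain ⟨a, b, hab, hPab⟩ := Finset.card_eq_two.1 hP
    have ha : a ∈ V.filter fun u => u ≠ v ∧ (negForm N u v = 1 ∨ negForm N u v = -1) := by
      rw [hPab]; simp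
    have hb : b ∈ V.filter fun u => u ≠ v ∧ (negForm N u v = 1 ∨ negForm N u v = -1) := by
      rw [hPab]; simp
    simp only [Finset.mem_filter] at ha hb
    have heven : Even (∑ u ∈ V.erase v, negForm N u v) := by
      rw [hsum, hPab, Finset.sum_pair hab]
      rcases ha.2.2 with h1 | h1 <;> rcases hb.2.2 with h2 | h2 <;>
        rw [h1, h2] <;> decide
    have : negForm N v v + ∑ u ∈ V.erase v, negForm N u v + negForm N v v =
        2 * negForm N v v + ∑ u ∈ V.erase v, negForm N u v := by ring
    rw [this]
    exact (even_two_mul _).add heven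
  | zero => simp [negForm_zero_right]
  | add x y hx hy ihx ihy =>
    have h1 : negForm N (∑ v ∈ V, v) (x + y) + negForm N (x + y) (x + y) =
        (negForm N (∑ v ∈ V, v) x + negForm N x x) +
        (negForm N (∑ v ∈ V, v) y + negForm N y y) + 2 * negForm N x y := by
      rw [negForm_add_right, negForm_add_left, negForm_add_right, negForm_add_right,
        negForm_comm N y x]
      ring
    rw [h1]
    exact (ihx.add ihy).add (even_two_mul _)
  | neg x hx ihx =>
    have h1 : negForm N (∑ v ∈ V, v) (-x) + negForm N (-x) (-x) =
        (negForm N (∑ v ∈ V, v) x + negForm N x x) - 2 * negForm N (∑ v ∈ V, v) x := by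
      rw [negForm_neg_right, negForm_neg_left, negForm_neg_right]
      ring
    rw [h1]
    exact ihx.sub (even_two_mul _)

end Aux

/-- a circular subset `V ⊂ ℤ^N` such that `Λ_V` has finite and odd
index and whose Wu element `W` satisfies `W·W = -N` admits an adapted canonical
basis `E`; in particular `∑_{v ∈ V} v·e = 1` for each `e ∈ E`. -/
theorem stmt_7 (N : ℕ) (V : Finset (Fin N → ℤ))
    (hcirc : IsCircular N V)
    (hodd : Odd (AddSubgroup.closure (V : Set (Fin N → ℤ))).index)
    (hW : negForm N (∑ v ∈ V, v) (∑ v ∈ V, v) = -(N : ℤ)) :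
    ∃ E : Finset (Fin N → ℤ), IsAdaptedBasis N E V ∧
      ∀ e ∈ E, (∑ v ∈ V, negForm N v e) = 1 := by
  classical
  set W : Fin N → ℤ := ∑ v ∈ V, v with hWdef
  set Λ := AddSubgroup.closure (V : Set (Fin N → ℤ)) with hΛ
  set n := Λ.index with hn
  have hn_odd : Odd n := hodd
  -- Each coordinate of W is odd.
  have hWodd : ∀ i : Fin N, Odd (W i) := by
    intro i
    have hmem : n • (Pi.single i 1 : Fin N → ℤ) ∈ Λ := AddSubgroup.nsmul_index_mem Λ _
    have hchar := wu_char N V hcirc _ hmem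
    rw [negForm_nsmul_right, negForm_nsmul_left, negForm_nsmul_right] at hchar
    have hWx : negForm N W (Pi.single i 1) = -(W i) := by
      simp [negForm, Pi.single_apply]
    have hxx : negForm N (Pi.single i 1) (Pi.single i 1) = -1 := by
      rw [negForm_single]; simp
    rw [hWx, hxx] at hchar
    have hchar' : Even ((n : ℤ) * W i + (n : ℤ) * ((n : ℤ) * 1)) := by
      have : (n : ℤ) * W i + (n : ℤ) * ((n : ℤ) * 1) =
          -((n : ℤ) * -W i + (n : ℤ) * ((n : ℤ) * -1)) := by ring
      rw [this]
      exact hchar.neg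
    have hnZ : Odd (n : ℤ) := Int.odd_coe_nat n |>.2 hn_odd
    have hnn : Odd ((n : ℤ) * ((n : ℤ) * 1)) := by
      rw [mul_one]; exact hnZ.mul hnZ
    have hnW : Odd ((n : ℤ) * W i) := by
      have := hchar'.sub_odd hnn
      simpa using this
    exact (Int.odd_mul.1 hnW).2
  -- Each coordinate of W is ±1, via W·W = -N.
  have hsq : ∀ i : Fin N, W i * W i = 1 := by
    have hWW : ∑ i : Fin N, W i * W i = (N : ℤ) := by
      have : negForm N W W = -(N : ℤ) := hW
      rw [negForm] at this
      omega
    have hge : ∀ i : Fin N, (0 : ℤ) ≤ W i * W i - 1 := by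
      intro i
      have : W i ≠ 0 := by
        intro h0
        have := hWodd i
        rw [h0] at this
        exact (Int.not_odd_iff_even.2 Even.zero) this
      nlinarith [sq_nonneg (W i), this, Int.one_le_abs this, sq_abs (W i), sq_nonneg (W i - 1), sq_nonneg (W i + 1)]
    have hzero : ∑ i : Fin N, (W i * W i - 1) = 0 := by
      rw [Finset.sum_sub_distrib, hWW]
      simp
    have := (Finset.sum_eq_zero_iff_of_nonneg (fun i _ => hge i)).1 hzero
    intro i
    have := this i (Finset.mem_univ i)
    omega
  -- Construct the adapted basis.
  refine ⟨Finset.univ.image (fun i : Fin N => Pi.single i (-W i)), ?_, ?_⟩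
  · have hinj : Function.Injective (fun i : Fin N => Pi.single i (-W i)) := by
      intro i i' h
      by_contra hne
      have := congrFun h i
      simp [Pi.single_apply, hne] at this
      have := hsq i
      nlinarith
    refine ⟨⟨?_, ?_, ?_⟩, ?_⟩
    · rw [Finset.card_image_of_injective _ hinj, Finset.card_univ, Fintype.card_fin]
    · intro e he
      obtain ⟨i, _, rfl⟩ := Finset.mem_image.1 he
      rw [negForm_single]
      simp [hsq i]
    · intro e he f hf hef
      obtain ⟨i, _, rfl⟩ := Finset.mem_image.1 he
      obtain ⟨i', _, rfl⟩ := Finset.mem_image.1 hf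
      have hne : i ≠ i' := fun h => hef (by rw [h])
      rw [negForm_single, if_neg hne]
    · rw [Finset.sum_image (fun a _ b _ h => hinj h)]
      have : ∑ i : Fin N, Pi.single i (-W i) = fun j => -W j := by
        have := Finset.univ_sum_single (fun j => -W j)
        simpa using this
      rw [this]
      funext j
      simp [hWdef]
  · intro e he
    obtain ⟨i, _, rfl⟩ := Finset.mem_image.1 he
    rw [← negForm_sum_left, ← hWdef]
    have : negForm N W (Pi.single i (-W i)) = W i * W i := by
      simp [negForm, Pi.single_apply, mul_comm]
    rw [this, hsq i]
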